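/- Let P be an r-differential poset, and let j_{m−1} ⋖ j_m be any covering pair in P such that each of j_{m−1} and j_m covers at most one element of P. Then for any integer n ≥ m this pair extends to a saturated chain j_{m−1} ⋖ j_m ⋖ j_{m+1} ⋖ ⋯ ⋖ j_{n−1} ⋖ j_n in which every element j_ℓ covers at most one element of P. -/

import Mathlib

variable {α : Type*}

section Aux

variable [PartialOrder α] (rk : α → ℕ) [∀ n : ℕ, Fintype {x : α // rk x = n}]

lemma level_finite (k : ℕ) : {z : α | rk z = k}.Finite :=
  Set.finite_coe_iff.mp (Finite.of_fintype {x : α // rk x = k})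

lemma down_finite (hgrade : ∀ x y : α, x ⋖ y → rk y = rk x + 1) (x : α) :
    {z : α | z ⋖ x}.Finite := by
  refine (level_finite rk (rk x - 1)).subset ?_
  intro z hz
  have := hgrade z x hz
  simp only [Set.mem_setOf_eq]
  omega

lemma up_finite (hgrade : ∀ x y : α, x ⋖ y → rk y = rk x + 1) (x : α) :
    {z : α | x ⋖ z}.Finite := by
  refine (level_finite rk (rk x + 1)).subset ?_
  intro z hz
  have := hgrade x z hz
  simp only [Set.mem_setOf_eq]
  omega

lemma step_lemma (r : ℕ)
    (hgrade : ∀ x y : α, x ⋖ y → rk y = rk x + 1)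
    (hD1 : ∀ x : α, {z : α | x ⋖ z}.ncard = {y : α | y ⋖ x}.ncard + r)
    (hD2 : ∀ x y : α, x ≠ y →
      {z : α | z ⋖ x ∧ z ⋖ y}.ncard = {z : α | x ⋖ z ∧ y ⋖ z}.ncard)
    (x y : α) (hxy : x ⋖ y)
    (hx : {z : α | z ⋖ x}.ncard ≤ 1) (hy : {z : α | z ⋖ y}.ncard ≤ 1) :
    ∃ w : α, y ⋖ w ∧ {z : α | z ⋖ w}.ncard ≤ 1 := by
  classical
  have hdyfin : {z : α | z ⋖ y}.Finite := down_finite rk hgrade y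
  -- down y = {x}
  have hdy : {z : α | z ⋖ y} = {x} := by
    have h1 : 0 < {z : α | z ⋖ y}.ncard :=
      (Set.ncard_pos hdyfin).mpr ⟨x, hxy⟩
    have h2 : {z : α | z ⋖ y}.ncard = 1 := le_antisymm hy h1
    obtain ⟨a, ha⟩ := Set.ncard_eq_one.mp h2
    have hxa : x ∈ ({a} : Set α) := ha ▸ hxy
    rw [Set.mem_singleton_iff] at hxa
    rw [ha, hxa]
  by_contra hcon
  push_neg at hcon
  -- every cover of y has a second lower cover, which must cover x
  have key : ∀ w : α, ∃ z : α, y ⋖ w → (z ≠ y ∧ z ⋖ w ∧ x ⋖ z) := by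
    intro w
    by_cases hw : y ⋖ w
    · have h2 : 2 ≤ {z : α | z ⋖ w}.ncard := hcon w hw
      have : ¬ {z : α | z ⋖ w} ⊆ {y} := by
        intro hsub
        have := Set.ncard_le_ncard hsub (Set.finite_singleton y)
        simp [Set.ncard_singleton] at this
        omega
      obtain ⟨z, hzw, hzy⟩ := Set.not_subset.mp this
      rw [Set.mem_singleton_iff] at hzy
      refine ⟨z, fun _ => ⟨hzy, hzw, ?_⟩⟩
      -- common upper cover of z and y exists, so common lower cover exists
      have hup : 0 < {u : α | z ⋖ u ∧ y ⋖ u}.ncard := by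
        refine (Set.ncard_pos ?_).mpr ⟨w, hzw, hw⟩
        exact (up_finite rk hgrade z).subset (fun u hu => hu.1)
      have heq := hD2 z y hzy
      have hlow : ({u : α | u ⋖ z ∧ u ⋖ y}).Nonempty := by
        rw [← Set.ncard_pos ((down_finite rk hgrade z).subset
          (fun u hu => hu.1))]
        omega
      obtain ⟨u, huz, huy⟩ := hlow
      have : u ∈ ({x} : Set α) := hdy ▸ huy
      rw [Set.mem_singleton_iff] at this
      rwa [this] at huz
    · exact ⟨x, fun h => absurd h hw⟩
  choose f hf using key
  -- f is an injection from covers of y into covers of x minus y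
  have hmaps : Set.MapsTo f {w : α | y ⋖ w} ({w : α | x ⋖ w} \ {y}) := by
    intro w hw
    obtain ⟨h1, h2, h3⟩ := hf w hw
    exact ⟨h3, h1⟩
  have hinj : Set.InjOn f {w : α | y ⋖ w} := by
    intro w1 hw1 w2 hw2 heq
    by_contra hne
    obtain ⟨h1, h2, h3⟩ := hf w1 hw1
    obtain ⟨h1', h2', h3'⟩ := hf w2 hw2
    set z := f w1 with hz
    have hlow : {u : α | u ⋖ z ∧ u ⋖ y}.ncard ≤ 1 := by
      have hsub : {u : α | u ⋖ z ∧ u ⋖ y} ⊆ {x} := by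
        intro u hu
        have : u ∈ ({x} : Set α) := hdy ▸ hu.2
        exact this
      have := Set.ncard_le_ncard hsub (Set.finite_singleton x)
      simpa using this
    have hup : 2 ≤ {u : α | z ⋖ u ∧ y ⋖ u}.ncard := by
      have hfin : {u : α | z ⋖ u ∧ y ⋖ u}.Finite :=
        (up_finite rk hgrade z).subset (fun u hu => hu.1)
      rw [show (2:ℕ) = 1 + 1 by rfl]
      refine Nat.succ_le_of_lt ?_
      rw [Set.one_lt_ncard_iff hfin]
      exact ⟨w1, w2, ⟨h2, hw1⟩, ⟨heq ▸ h2', hw2⟩, hne⟩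
    have := hD2 z y h1
    omega
  have hcard := Set.ncard_le_ncard_of_injOn f hmaps hinj
    (((up_finite rk hgrade x)).diff)
  have hupx : {w : α | x ⋖ w}.ncard = {z : α | z ⋖ x}.ncard + r := hD1 x
  have hupy : {w : α | y ⋖ w}.ncard = {z : α | z ⋖ y}.ncard + r := hD1 y
  have hymem : y ∈ {w : α | x ⋖ w} := hxy
  have hdiff : ({w : α | x ⋖ w} \ {y}).ncard = {w : α | x ⋖ w}.ncard - 1 :=
    Set.ncard_diff_singleton_of_mem hymem
  rw [hdy] at hupy
  simp [Set.ncard_singleton] at hupy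
  omega

end Aux

/-- A covering pair `x ⋖ y` in an `r`-differential poset in which both elements
cover at most one element extends, for any `n ≥ rank y`, to a saturated chain up to
rank `n` all of whose elements cover at most one element. -/
theorem covering_pair_extends_to_chain [PartialOrder α] [OrderBot α]
    (rk : α → ℕ) (r : ℕ) [∀ n : ℕ, Fintype {x : α // rk x = n}]
    (hr : 1 ≤ r) (hbot : rk ⊥ = 0)
    (hgrade : ∀ x y : α, x ⋖ y → rk y = rk x + 1)
    (hdown : ∀ x : α, x ≠ ⊥ → ∃ y : α, y ⋖ x)
    (hD1 : ∀ x : α, {z : α | x ⋖ z}.ncard = {y : α | y ⋖ x}.ncard + r)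
    (hD2 : ∀ x y : α, x ≠ y →
      {z : α | z ⋖ x ∧ z ⋖ y}.ncard = {z : α | x ⋖ z ∧ y ⋖ z}.ncard)
    (x y : α) (hxy : x ⋖ y)
    (hx : {z : α | z ⋖ x}.ncard ≤ 1) (hy : {z : α | z ⋖ y}.ncard ≤ 1)
    (n : ℕ) (hn : rk y ≤ n) :
    ∃ c : ℕ → α, c (rk y - 1) = x ∧ c (rk y) = y ∧
      (∀ ℓ : ℕ, rk y ≤ ℓ → ℓ < n → c ℓ ⋖ c (ℓ + 1)) ∧
      (∀ ℓ : ℕ, rk y - 1 ≤ ℓ → ℓ ≤ n → {z : α | z ⋖ c ℓ}.ncard ≤ 1) := by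
  have hry : 1 ≤ rk y := by have := hgrade x y hxy; omega
  induction n, hn using Nat.le_induction with
  | base =>
    refine ⟨fun ℓ => if ℓ < rk y then x else y, ?_, ?_, ?_, ?_⟩
    · simp only [if_pos (by omega : rk y - 1 < rk y)]
    · simp
    · intro ℓ h1 h2; omega
    · intro ℓ h1 h2
      by_cases h : ℓ < rk y
      · simpa [h] using hx
      · simpa [h] using hy
  | succ n hn ih =>
    obtain ⟨c, hc1, hc2, hc3, hc4⟩ := ih
    -- the top covering pair of the chain
    have htop : ∃ p : α, p ⋖ c n ∧ {z : α | z ⋖ p}.ncard ≤ 1 := by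
      rcases Nat.lt_or_ge (rk y) (n + 1) with h | h
      · rcases Nat.eq_or_lt_of_le hn with h' | h'
        · refine ⟨x, ?_, hx⟩
          rw [show n = rk y from h'.symm, hc2]
          exact hxy
        · have hcov := hc3 (n - 1) (by omega) (by omega)
          rw [show n - 1 + 1 = n by omega] at hcov
          exact ⟨c (n - 1), hcov, hc4 (n - 1) (by omega) (by omega)⟩
      · exact absurd h (by omega)
    obtain ⟨p, hp, hpcard⟩ := htop
    obtain ⟨w, hw, hwcard⟩ := step_lemma rk r hgrade hD1 hD2 p (c n) hp hpcard
      (hc4 n (by omega) le_rfl)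
    refine ⟨fun ℓ => if ℓ ≤ n then c ℓ else w, ?_, ?_, ?_, ?_⟩
    · simp only [if_pos (by omega : rk y - 1 ≤ n)]; exact hc1
    · simp only [if_pos hn]; exact hc2
    · intro ℓ h1 h2
      by_cases h : ℓ + 1 ≤ n
      · simp only [if_pos (by omega : ℓ ≤ n), if_pos h]
        exact hc3 ℓ h1 (by omega)
      · have : ℓ = n := by omega
        subst this
        simp only [if_pos le_rfl, if_neg (by omega : ¬ ℓ + 1 ≤ ℓ)]
        exact hw
    · intro ℓ h1 h2
      by_cases h : ℓ ≤ n
      · simp only [if_pos h]; exact hc4 ℓ h1 h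
      · simp only [if_neg h]; exact hwcard
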